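/- arXiv:1409.5937 — 3 statements merged into one kernel-verified Lean document; each statement's English description precedes it below -/
import Mathlib

section
/- Robustness of the geometric median: Let H be a real Hilbert space, let θ_1, …, θ_k ∈ H, let θ* ∈ H, let r ≥ 0, and fix γ ∈ (0, 1/2). Suppose there exists a subset J ⊆ {1, …, k} of cardinality |J| > (1 − γ)·k such that ‖θ_j − θ*‖ ≤ r for all j ∈ J. Then every geometric median θ̃ of θ_1, …, θ_k satisfies ‖θ̃ − θ*‖ ≤ C_γ · r. -/
set_option maxHeartbeats 1000000


open scoped BigOperators

open scoped RealInnerProductSpace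

/-- A point `m` is a geometric median of the points `θ 1, …, θ k` if it minimizes
`y ↦ ∑ j, ‖y - θ j‖`. -/
def IsGeomMedian {H : Type*} [NormedAddCommGroup H] {k : ℕ} (θ : Fin k → H) (m : H) : Prop :=
  ∀ y : H, ∑ j, ‖m - θ j‖ ≤ ∑ j, ‖y - θ j‖

/-- The constant `C_γ = (1 - γ) √(1/(1 - 2γ))`. -/
noncomputable def Cconst (γ : ℝ) : ℝ := (1 - γ) * Real.sqrt (1 / (1 - 2 * γ))

/-- **Robustness of the geometric median.** If more than `(1 - γ) k` of the points
`θ 1, …, θ k` lie within distance `r` of `θ*`, then every geometric median of the points lies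
within distance `C_γ · r` of `θ*`. -/
theorem geomMedian_robust {H : Type*} [NormedAddCommGroup H] [InnerProductSpace ℝ H]
    [CompleteSpace H] {k : ℕ} (θ : Fin k → H) (θstar : H) (r : ℝ) (hr : 0 ≤ r)
    (γ : ℝ) (hγ : γ ∈ Set.Ioo (0 : ℝ) (1 / 2))
    (J : Finset (Fin k)) (hJcard : (1 - γ) * k < J.card)
    (hJ : ∀ j ∈ J, ‖θ j - θstar‖ ≤ r)
    (θtilde : H) (hmed : IsGeomMedian θ θtilde) :
    ‖θtilde - θstar‖ ≤ Cconst γ * r := by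
  obtain ⟨hγ0, hγ2⟩ := hγ
  have h2γ : 0 < 1 - 2 * γ := by linarith
  have h1γ : 0 < 1 - γ := by linarith
  have hCnn : 0 ≤ Cconst γ := mul_nonneg (by linarith) (Real.sqrt_nonneg _)
  by_contra hcon
  push_neg at hcon
  set R := ‖θtilde - θstar‖ with hRdef
  clear_value R
  have hRpos : 0 < R := lt_of_le_of_lt (mul_nonneg hCnn hr) hcon
  have hn : 0 < (J.card : ℝ) :=
    lt_of_le_of_lt (mul_nonneg h1γ.le (Nat.cast_nonneg k)) hJcard
  -- C ≥ 1
  have hC1 : 1 ≤ Cconst γ := by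
    have hsle : 1/(1-γ) ≤ Real.sqrt (1/(1-2*γ)) := by
      rw [Real.le_sqrt' (one_div_pos.mpr h1γ), div_pow, one_pow,
        div_le_div_iff₀ (by positivity) h2γ]
      nlinarith
    calc (1:ℝ) = (1-γ) * (1/(1-γ)) := by field_simp
      _ ≤ (1-γ) * Real.sqrt (1/(1-2*γ)) := mul_le_mul_of_nonneg_left hsle h1γ.le
      _ = Cconst γ := rfl
  have hrR : r < R := lt_of_le_of_lt (le_mul_of_one_le_left hr hC1) hcon
  have haRr : 0 < R - r := by linarith
  have hD : 0 < R^2 - r^2 := by nlinarith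
  set s := Real.sqrt (R^2 - r^2) / R with hsdef
  clear_value s
  have hsqD : Real.sqrt (R^2 - r^2)^2 = R^2 - r^2 := Real.sq_sqrt hD.le
  have hs_gt : γ / (1 - γ) < s := by
    have h1 : (Cconst γ * r)^2 < R^2 := by
      nlinarith [mul_nonneg hCnn hr]
    have hC2 : (Cconst γ)^2 = (1-γ)^2 * (1/(1-2*γ)) := by
      rw [Cconst, mul_pow, Real.sq_sqrt (by positivity)]
    have h3 : r^2*(1-γ)^2 < R^2*(1-2*γ) := by
      have h2 : r^2*(1-γ)^2/(1-2*γ) < R^2 := by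
        calc r^2*(1-γ)^2/(1-2*γ) = (Cconst γ * r)^2 := by
              rw [mul_pow, hC2]; ring
          _ < R^2 := h1
      exact (div_lt_iff₀ h2γ).mp h2
    have h4 : γ * R / (1-γ) < Real.sqrt (R^2 - r^2) := by
      rw [Real.lt_sqrt (by positivity), div_pow, div_lt_iff₀ (by positivity)]
      nlinarith
    rw [hsdef, div_lt_div_iff₀ h1γ hRpos]
    calc γ * R = (γ*R/(1-γ)) * (1-γ) := by field_simp
      _ < Real.sqrt (R^2-r^2) * (1-γ) := mul_lt_mul_of_pos_right h4 h1γ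
  set u : H := R⁻¹ • (θstar - θtilde) with hudef
  clear_value u
  have hnu : ‖u‖ = 1 := by
    rw [hudef, norm_smul, norm_inv, Real.norm_eq_abs, abs_of_pos hRpos,
      norm_sub_rev, ← hRdef, inv_mul_cancel₀ hRpos.ne']
  -- the key pointwise bound for j ∈ J
  have key : ∀ t : ℝ, 0 < t → ∀ j ∈ J,
      ‖θtilde + t • u - θ j‖ ≤ ‖θtilde - θ j‖ - t * s + t^2 / (2*(R - r)) := by
    intro t ht j hj
    set a := ‖θtilde - θ j‖ with hadef
    clear_value a
    have haR : R - r ≤ a := by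
      have h := norm_sub_norm_le (θtilde - θstar) (θ j - θstar)
      rw [sub_sub_sub_cancel_right] at h
      have := hJ j hj
      rw [← hadef] at h
      linarith
    have ha : 0 < a := lt_of_lt_of_le haRr haR
    have hinner : ⟪θtilde - θ j, u⟫ ≤ -(a * s) := by
      have hexp : ‖θ j - θstar‖^2 = a^2 + R^2 + 2*⟪θtilde - θ j, θstar - θtilde⟫ := by
        have hrw : θ j - θstar = -((θtilde - θ j) + (θstar - θtilde)) := by abel
        rw [hrw, norm_neg, norm_add_sq_real, norm_sub_rev θstar θtilde, ← hRdef, ← hadef]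
        ring
      have h5 : ⟪θtilde - θ j, θstar - θtilde⟫ ≤ (r^2 - a^2 - R^2)/2 := by
        have hb : ‖θ j - θstar‖^2 ≤ r^2 := by
          have := hJ j hj
          nlinarith [norm_nonneg (θ j - θstar)]
        linarith [hexp.symm.le.trans hb]
      have h6 : (r^2 - a^2 - R^2)/2 ≤ -(a * Real.sqrt (R^2-r^2)) := by
        nlinarith [sq_nonneg (a - Real.sqrt (R^2 - r^2)), hsqD]
      have h7 : ⟪θtilde - θ j, u⟫ = R⁻¹ * ⟪θtilde - θ j, θstar - θtilde⟫ := by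
        rw [hudef, real_inner_smul_right]
      rw [h7, hsdef]
      have hrw2 : -(a * (Real.sqrt (R^2-r^2)/R)) = R⁻¹ * (-(a * Real.sqrt (R^2-r^2))) := by
        ring
      rw [hrw2]
      exact mul_le_mul_of_nonneg_left (h5.trans h6) (inv_nonneg.mpr hRpos.le)
    have hsq : ‖θtilde + t • u - θ j‖^2 = 2*a^2 + 2*t*⟪θtilde - θ j, u⟫ + t^2 - a^2 := by
      have hrw : θtilde + t • u - θ j = (θtilde - θ j) + t • u := by abel
      rw [hrw, norm_add_sq_real, real_inner_smul_right, norm_smul, hnu, Real.norm_eq_abs,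
        mul_one, sq_abs, ← hadef]
      ring
    have hb2 : ‖θtilde + t • u - θ j‖ ≤ (‖θtilde + t • u - θ j‖^2 + a^2)/(2*a) := by
      rw [le_div_iff₀ (by positivity)]
      nlinarith [sq_nonneg (‖θtilde + t • u - θ j‖ - a)]
    have step1 : (2*a^2 + 2*t*⟪θtilde - θ j, u⟫ + t^2)/(2*a) ≤ a - t*s + t^2/(2*a) := by
      rw [div_le_iff₀ (by positivity : (0:ℝ) < 2*a)]
      have h8 : t^2/(2*a) * (2*a) = t^2 := by field_simp
      nlinarith [mul_le_mul_of_nonneg_left hinner ht.le]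
    have step2 : t^2/(2*a) ≤ t^2/(2*(R-r)) :=
      div_le_div_of_nonneg_left (sq_nonneg t) (by positivity) (by linarith)
    calc ‖θtilde + t • u - θ j‖ ≤ (‖θtilde + t • u - θ j‖^2 + a^2)/(2*a) := hb2
      _ = (2*a^2 + 2*t*⟪θtilde - θ j, u⟫ + t^2)/(2*a) := by rw [hsq]; ring_nf
      _ ≤ a - t*s + t^2/(2*a) := step1
      _ ≤ a - t*s + t^2/(2*(R-r)) := by linarith
  -- the master inequality
  have master : ∀ t : ℝ, 0 < t →
      s * J.card ≤ (Jᶜ.card : ℝ) + J.card * (t / (2*(R-r))) := by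
    intro t ht
    have hm := hmed (θtilde + t • u)
    have hsum1 : ∑ j ∈ J, ‖θtilde + t • u - θ j‖ ≤
        ∑ j ∈ J, (‖θtilde - θ j‖ - t*s + t^2/(2*(R-r))) :=
      Finset.sum_le_sum (fun j hj => key t ht j hj)
    have hsum2 : ∑ j ∈ Jᶜ, ‖θtilde + t • u - θ j‖ ≤ ∑ j ∈ Jᶜ, (‖θtilde - θ j‖ + t) := by
      apply Finset.sum_le_sum
      intro j _
      calc ‖θtilde + t • u - θ j‖ = ‖(θtilde - θ j) + t • u‖ := by
            rw [show θtilde + t • u - θ j = (θtilde - θ j) + t • u from by abel]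
        _ ≤ ‖θtilde - θ j‖ + ‖t • u‖ := norm_add_le _ _
        _ = ‖θtilde - θ j‖ + t := by
            rw [norm_smul, hnu, mul_one, Real.norm_eq_abs, abs_of_pos ht]
    have hsplit1 : ∑ j ∈ J, ‖θtilde + t • u - θ j‖ + ∑ j ∈ Jᶜ, ‖θtilde + t • u - θ j‖
        = ∑ j, ‖θtilde + t • u - θ j‖ := Finset.sum_add_sum_compl J _
    have hsplit2 : ∑ j ∈ J, ‖θtilde - θ j‖ + ∑ j ∈ Jᶜ, ‖θtilde - θ j‖
        = ∑ j, ‖θtilde - θ j‖ := Finset.sum_add_sum_compl J _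
    have hc1 : ∑ j ∈ J, (‖θtilde - θ j‖ - t*s + t^2/(2*(R-r)))
        = ∑ j ∈ J, ‖θtilde - θ j‖ + (J.card : ℝ) * (t^2/(2*(R-r)) - t*s) := by
      rw [Finset.sum_add_distrib, Finset.sum_sub_distrib, Finset.sum_const, Finset.sum_const,
        nsmul_eq_mul, nsmul_eq_mul]
      ring
    have hc2 : ∑ j ∈ Jᶜ, (‖θtilde - θ j‖ + t)
        = ∑ j ∈ Jᶜ, ‖θtilde - θ j‖ + (Jᶜ.card : ℝ) * t := by
      rw [Finset.sum_add_distrib, Finset.sum_const, nsmul_eq_mul]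
    have hkey : 0 ≤ (J.card : ℝ) * (t^2/(2*(R-r)) - t*s) + (Jᶜ.card : ℝ) * t := by
      have := hm
      nlinarith [hsum1, hsum2, hsplit1, hsplit2, hc1, hc2]
    have h9 : t * (s * (J.card:ℝ)) ≤ t * ((Jᶜ.card : ℝ) + (J.card:ℝ) * (t / (2*(R-r)))) := by
      have hrw : (J.card : ℝ) * (t^2/(2*(R-r)) - t*s) + (Jᶜ.card : ℝ) * t
          = t * ((Jᶜ.card : ℝ) + (J.card:ℝ) * (t / (2*(R-r)))) - t * (s * (J.card:ℝ)) := by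
        ring
      linarith [hrw ▸ hkey]
    exact le_of_mul_le_mul_left h9 ht
  have hfin : s * J.card ≤ (Jᶜ.card : ℝ) := by
    apply le_of_forall_pos_le_add
    intro ε hε
    have hmt := master (2*(R-r)*ε/(J.card:ℝ)) (by positivity)
    have heq : (J.card:ℝ) * ((2*(R-r)*ε/(J.card:ℝ))/(2*(R-r))) = ε := by
      field_simp
    linarith
  have hcard : (J.card : ℝ) + (Jᶜ.card : ℝ) = k := by
    have h := Finset.card_add_card_compl J
    have : (J.card : ℝ) + (Jᶜ.card : ℝ) = (Fintype.card (Fin k) : ℝ) := by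
      exact_mod_cast congrArg (Nat.cast : ℕ → ℝ) h
    simpa using this
  have hsn : γ/(1-γ) * (J.card:ℝ) < s * (J.card:ℝ) := mul_lt_mul_of_pos_right hs_gt hn
  have hlast : γ * (J.card:ℝ) < (1-γ) * (Jᶜ.card:ℝ) := by
    have h10 := lt_of_lt_of_le hsn hfin
    rw [div_mul_eq_mul_div, div_lt_iff₀ h1γ] at h10
    linarith
  nlinarith [hJcard, hcard, hlast]
end

section
/- Tolerance of DRL to machine breakdown: Let H be a real Hilbert space, θ* ∈ H, r ≥ 0, and ε ∈ (0, 1/2). Let θ_1, …, θ_k ∈ H and suppose that at least (1/2 + ε)·k of the points satisfy ‖θ_j − θ*‖ ≤ r, while the remaining points (e.g., outputs of broken machines) are arbitrary. Then every geometric median θ̃ of θ_1, …, θ_k satisfies ‖θ̃ − θ*‖ ≤ C_{1/2 − ε} · r, where C_{1/2 − ε} = (1/2 + ε)/√(2ε). -/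
open scoped BigOperators

set_option maxHeartbeats 1000000 in
/-- **Tolerance of DRL to machine breakdown.** If at least `(1/2 + ε) k` of the points
`θ 1, …, θ k` lie within distance `r` of `θ*` (the rest being arbitrary, e.g. outputs of broken
machines), then every geometric median of the points lies within distance
`C_{1/2 - ε} · r = ((1/2 + ε)/√(2ε)) · r` of `θ*`. -/
theorem drl_tolerates_breakdown {H : Type*} [NormedAddCommGroup H] [InnerProductSpace ℝ H]
    [CompleteSpace H] {k : ℕ} (hk : 0 < k) (θ : Fin k → H) (θstar : H) (r : ℝ) (hr : 0 ≤ r)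
    (ε : ℝ) (hε : ε ∈ Set.Ioo (0 : ℝ) (1 / 2))
    (J : Finset (Fin k)) (hJcard : (1 / 2 + ε) * k ≤ J.card)
    (hJ : ∀ j ∈ J, ‖θ j - θstar‖ ≤ r)
    (θtilde : H) (hmed : IsGeomMedian θ θtilde) :
    ‖θtilde - θstar‖ ≤ (1 / 2 + ε) / Real.sqrt (2 * ε) * r := by
  obtain ⟨hε0, hε2⟩ := hε
  by_contra hcon
  push_neg at hcon
  set s := Real.sqrt (2 * ε) with hs_def
  have hs0 : 0 < s := Real.sqrt_pos.mpr (by linarith)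
  have hs2 : s ^ 2 = 2 * ε := Real.sq_sqrt (by linarith)
  set d := ‖θtilde - θstar‖ with hd_def
  have hC1 : (1 : ℝ) ≤ (1 / 2 + ε) / s := by
    rw [le_div_iff₀ hs0]
    nlinarith [hs2, hs0]
  have hCr0 : (0 : ℝ) ≤ (1 / 2 + ε) / s * r :=
    mul_nonneg (le_trans zero_le_one hC1) hr
  have hd0 : 0 < d := lt_of_le_of_lt hCr0 hcon
  have hrd : r < d := lt_of_le_of_lt (le_mul_of_one_le_left hr hC1) hcon
  have hdr0 : 0 < d - r := by linarith
  -- lower bound on distances from good points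
  have hlow : ∀ j ∈ J, d - r ≤ ‖θtilde - θ j‖ := by
    intro j hj
    have h1 : ‖θtilde - θstar‖ ≤ ‖θtilde - θ j‖ + ‖θ j - θstar‖ := by
      calc ‖θtilde - θstar‖ = ‖(θtilde - θ j) + (θ j - θstar)‖ := by abel_nf
        _ ≤ ‖θtilde - θ j‖ + ‖θ j - θstar‖ := norm_add_le _ _
    have h2 := hJ j hj
    rw [← hd_def] at h1
    linarith
  set c := Real.sqrt (d ^ 2 - r ^ 2) / d with hc_def
  have hdr2 : (0 : ℝ) ≤ d ^ 2 - r ^ 2 := by nlinarith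
  have hc0 : 0 ≤ c := div_nonneg (Real.sqrt_nonneg _) hd0.le
  have hsq : Real.sqrt (d ^ 2 - r ^ 2) ^ 2 = d ^ 2 - r ^ 2 := Real.sq_sqrt hdr2
  set u := d⁻¹ • (θstar - θtilde) with hu_def
  have hvd : ‖θstar - θtilde‖ = d := by rw [hd_def, norm_sub_rev]
  have hu : ‖u‖ = 1 := by
    rw [hu_def, norm_smul, norm_inv, Real.norm_eq_abs, abs_of_pos hd0, hvd]
    field_simp
  -- inner product bound for good points
  have hinner : ∀ j ∈ J, (inner ℝ (θtilde - θ j) u : ℝ) ≤ -(c * ‖θtilde - θ j‖) := by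
    intro j hj
    have hb : ‖(θ j - θtilde) - (θstar - θtilde)‖ ≤ r := by
      have he : (θ j - θtilde) - (θstar - θtilde) = θ j - θstar := by abel
      rw [he]; exact hJ j hj
    have hexp : ‖(θ j - θtilde) - (θstar - θtilde)‖ ^ 2
        = ‖θ j - θtilde‖ ^ 2 - 2 * inner ℝ (θ j - θtilde) (θstar - θtilde)
          + ‖θstar - θtilde‖ ^ 2 := norm_sub_sq_real _ _
    have hkey : Real.sqrt (d ^ 2 - r ^ 2) * ‖θ j - θtilde‖
        ≤ (inner ℝ (θ j - θtilde) (θstar - θtilde) : ℝ) := by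
      nlinarith [hsq, sq_nonneg (‖θ j - θtilde‖ - Real.sqrt (d ^ 2 - r ^ 2)),
        norm_nonneg ((θ j - θtilde) - (θstar - θtilde)), hb, hr, hexp, hvd]
    have h1 : (inner ℝ (θtilde - θ j) u : ℝ)
        = -(d⁻¹ * inner ℝ (θ j - θtilde) (θstar - θtilde)) := by
      rw [hu_def, real_inner_smul_right]
      have he : θtilde - θ j = -(θ j - θtilde) := by abel
      rw [he, inner_neg_left]; ring
    have hnr : ‖θtilde - θ j‖ = ‖θ j - θtilde‖ := norm_sub_rev _ _
    rw [h1, hnr, neg_le_neg_iff, hc_def, div_mul_eq_mul_div, inv_mul_eq_div]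
    exact div_le_div_of_nonneg_right hkey hd0.le
  -- the key step inequality, for every t > 0
  have hstep : ∀ t : ℝ, 0 < t →
      c * J.card ≤ (Jᶜ.card : ℝ) + t * J.card / (2 * (d - r)) := by
    intro t ht
    have hgood : ∀ j ∈ J,
        ‖(θtilde + t • u) - θ j‖ ≤ ‖θtilde - θ j‖ + (t ^ 2 / (2 * (d - r)) - t * c) := by
      intro j hj
      have hna : d - r ≤ ‖θtilde - θ j‖ := hlow j hj
      have hna0 : 0 < ‖θtilde - θ j‖ := lt_of_lt_of_le hdr0 hna
      set a := θtilde - θ j with ha_def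
      have hy : (θtilde + t • u) - θ j = a + t • u := by rw [ha_def]; abel
      rw [hy]
      have hsq2 : ‖a + t • u‖ ^ 2 = ‖a‖ ^ 2 + 2 * t * inner ℝ a u + t ^ 2 := by
        rw [norm_add_sq_real, real_inner_smul_right, norm_smul, Real.norm_eq_abs, hu,
          mul_one, sq_abs]
        ring
      have hip : (inner ℝ a u : ℝ) ≤ -(c * ‖a‖) := hinner j hj
      have h2na : 2 * ‖a‖ * ‖a + t • u‖ ≤ 2 * ‖a‖ ^ 2 - 2 * t * c * ‖a‖ + t ^ 2 := by
        nlinarith [sq_nonneg (‖a + t • u‖ - ‖a‖), hsq2, hip, ht]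
      have h3 : ‖a + t • u‖ ≤ ‖a‖ - t * c + t ^ 2 / (2 * ‖a‖) := by
        rw [← sub_nonneg]
        have hrec : ‖a‖ - t * c + t ^ 2 / (2 * ‖a‖) - ‖a + t • u‖
            = (2 * ‖a‖ ^ 2 - 2 * t * c * ‖a‖ + t ^ 2 - 2 * ‖a‖ * ‖a + t • u‖) / (2 * ‖a‖) := by
          field_simp
        rw [hrec]
        apply div_nonneg _ (by positivity)
        linarith
      have h4 : t ^ 2 / (2 * ‖a‖) ≤ t ^ 2 / (2 * (d - r)) := by
        apply div_le_div_of_nonneg_left (sq_nonneg t) (by positivity)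
        linarith
      linarith
    have hbad : ∀ j ∈ Jᶜ, ‖(θtilde + t • u) - θ j‖ ≤ ‖θtilde - θ j‖ + t := by
      intro j _
      have hy : (θtilde + t • u) - θ j = (θtilde - θ j) + t • u := by abel
      rw [hy]
      calc ‖(θtilde - θ j) + t • u‖ ≤ ‖θtilde - θ j‖ + ‖t • u‖ := norm_add_le _ _
        _ = ‖θtilde - θ j‖ + t := by
            rw [norm_smul, Real.norm_eq_abs, hu, mul_one, abs_of_pos ht]
    have hmed' := hmed (θtilde + t • u)
    have hsplit1 : ∑ j, ‖θtilde - θ j‖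
        = ∑ j ∈ J, ‖θtilde - θ j‖ + ∑ j ∈ Jᶜ, ‖θtilde - θ j‖ :=
      (Finset.sum_add_sum_compl J _).symm
    have hsplit2 : ∑ j, ‖(θtilde + t • u) - θ j‖
        = ∑ j ∈ J, ‖(θtilde + t • u) - θ j‖ + ∑ j ∈ Jᶜ, ‖(θtilde + t • u) - θ j‖ :=
      (Finset.sum_add_sum_compl J _).symm
    have hJsum : ∑ j ∈ J, ‖(θtilde + t • u) - θ j‖
        ≤ ∑ j ∈ J, ‖θtilde - θ j‖ + J.card * (t ^ 2 / (2 * (d - r)) - t * c) := by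
      calc ∑ j ∈ J, ‖(θtilde + t • u) - θ j‖
          ≤ ∑ j ∈ J, (‖θtilde - θ j‖ + (t ^ 2 / (2 * (d - r)) - t * c)) :=
            Finset.sum_le_sum hgood
        _ = ∑ j ∈ J, ‖θtilde - θ j‖ + J.card * (t ^ 2 / (2 * (d - r)) - t * c) := by
            rw [Finset.sum_add_distrib, Finset.sum_const, nsmul_eq_mul]
    have hJcsum : ∑ j ∈ Jᶜ, ‖(θtilde + t • u) - θ j‖
        ≤ ∑ j ∈ Jᶜ, ‖θtilde - θ j‖ + Jᶜ.card * t := by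
      calc ∑ j ∈ Jᶜ, ‖(θtilde + t • u) - θ j‖
          ≤ ∑ j ∈ Jᶜ, (‖θtilde - θ j‖ + t) := Finset.sum_le_sum hbad
        _ = ∑ j ∈ Jᶜ, ‖θtilde - θ j‖ + Jᶜ.card * t := by
            rw [Finset.sum_add_distrib, Finset.sum_const, nsmul_eq_mul]
    have h0 : (0 : ℝ) ≤ J.card * (t ^ 2 / (2 * (d - r)) - t * c) + Jᶜ.card * t := by
      rw [hsplit1, hsplit2] at hmed'
      linarith
    have ht' : t * (c * J.card) ≤ t * ((Jᶜ.card : ℝ) + t * J.card / (2 * (d - r))) := by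
      have hexp : t * ((Jᶜ.card : ℝ) + t * J.card / (2 * (d - r))) - t * (c * J.card)
          = J.card * (t ^ 2 / (2 * (d - r)) - t * c) + Jᶜ.card * t := by
        field_simp
        ring
      linarith
    exact le_of_mul_le_mul_left ht' ht
  -- pass to the limit t → 0
  have hJpos : (0 : ℝ) < J.card := by
    have hk' : (0 : ℝ) < (k : ℝ) := by exact_mod_cast hk
    nlinarith [hJcard]
  have hfinal : c * J.card ≤ (Jᶜ.card : ℝ) := by
    refine le_of_forall_pos_le_add ?_
    intro δ hδ
    have ht0 : 0 < δ * (2 * (d - r)) / J.card := by positivity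
    have h := hstep (δ * (2 * (d - r)) / J.card) ht0
    have heq : δ * (2 * (d - r)) / J.card * J.card / (2 * (d - r)) = δ := by
      field_simp
    rw [heq] at h
    exact h
  -- cardinality arithmetic
  have hcard_le : J.card ≤ k := by
    simpa using Finset.card_le_univ J
  have hcompl : (Jᶜ.card : ℝ) = k - J.card := by
    rw [Finset.card_compl, Fintype.card_fin, Nat.cast_sub hcard_le]
  -- conclude
  have hkR : (0 : ℝ) < (k : ℝ) := by exact_mod_cast hk
  have hcq : c * (1 / 2 + ε) ≤ 1 / 2 - ε := by
    have h1 : c * ((1 / 2 + ε) * k) ≤ c * J.card :=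
      mul_le_mul_of_nonneg_left hJcard hc0
    have h2 : (Jᶜ.card : ℝ) ≤ (1 / 2 - ε) * k := by
      rw [hcompl]; nlinarith [hJcard]
    have h3 : c * (1 / 2 + ε) * k ≤ (1 / 2 - ε) * k := by nlinarith [hfinal]
    exact le_of_mul_le_mul_right (by linarith) hkR
  have hA : Real.sqrt (d ^ 2 - r ^ 2) * (1 / 2 + ε) ≤ (1 / 2 - ε) * d := by
    have := mul_le_mul_of_nonneg_right hcq hd0.le
    rw [hc_def] at this
    calc Real.sqrt (d ^ 2 - r ^ 2) * (1 / 2 + ε)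
        = Real.sqrt (d ^ 2 - r ^ 2) / d * (1 / 2 + ε) * d := by
          field_simp [hd0.ne']
      _ ≤ (1 / 2 - ε) * d := this
  have hA2 : (d ^ 2 - r ^ 2) * (1 / 2 + ε) ^ 2 ≤ (1 / 2 - ε) ^ 2 * d ^ 2 := by
    have hAnn : 0 ≤ Real.sqrt (d ^ 2 - r ^ 2) * (1 / 2 + ε) :=
      mul_nonneg (Real.sqrt_nonneg _) (by linarith)
    nlinarith [mul_self_le_mul_self hAnn hA, hsq]
  have hB : (1 / 2 + ε) * r < d * s := by
    rw [div_mul_eq_mul_div, div_lt_iff₀ hs0] at hcon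
    linarith
  have hB2 : ((1 / 2 + ε) * r) ^ 2 < (d * s) ^ 2 := by
    have hBnn : 0 ≤ (1 / 2 + ε) * r := mul_nonneg (by linarith) hr
    nlinarith [mul_self_lt_mul_self hBnn hB]
  nlinarith [hA2, hB2, hs2, hd0, hr, hε0]
end

section
/- Quantitative breakdown-point theorem for DRL: Let H be a real Hilbert space, θ* ∈ H, r ≥ 0, λ* ∈ (0, 1], and δ ∈ (0, 1/2). Suppose the k machines have outlier fractions λ_1, …, λ_k ∈ [0, 1] with average (1/k)·Σ_{i=1}^k λ_i ≤ (1/2 − δ)·λ*, and that every machine i whose outlier fraction satisfies λ_i ≤ λ* outputs an estimate θ̂_i ∈ H with ‖θ̂_i − θ*‖ ≤ r (machines with λ_i > λ* output arbitrary points of H). Then strictly more than (1/2 + δ)·k machines satisfy λ_i ≤ λ*, and every geometric median θ̃ of θ̂_1, …, θ̂_k satisfies ‖θ̃ − θ*‖ ≤ C_{1/2 − δ} · r, where C_{1/2 − δ} = (1/2 + δ)/√(2δ). -/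
open scoped BigOperators

private lemma le_of_small_t {A B M t₀ : ℝ} (hM : 0 ≤ M) (ht₀ : 0 < t₀)
    (h : ∀ t : ℝ, 0 < t → t ≤ t₀ → A ≤ B + M * t) : A ≤ B := by
  apply le_of_forall_pos_le_add
  intro ε hε
  have h1 : 0 < min (ε / (M + 1)) t₀ := lt_min (by positivity) ht₀
  have h2 := h _ h1 (min_le_right _ _)
  have h3 : M * min (ε / (M + 1)) t₀ ≤ ε := by
    have h5 : M * min (ε / (M + 1)) t₀ ≤ M * (ε / (M + 1)) :=
      mul_le_mul_of_nonneg_left (min_le_left _ _) hM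
    have h4 : M * (ε / (M + 1)) ≤ ε := by
      rw [mul_div_assoc', div_le_iff₀ (by linarith)]
      nlinarith
    linarith
  linarith

set_option maxHeartbeats 1600000 in
private lemma geom_median_bound {H : Type*} [NormedAddCommGroup H] [InnerProductSpace ℝ H]
    {k : ℕ} (θ : Fin k → H) (z : H) (r : ℝ) (hr : 0 ≤ r) (δ : ℝ)
    (hδ0 : 0 < δ) (hδ2 : δ < 1 / 2)
    (J : Finset (Fin k)) (hJ : ∀ j ∈ J, ‖θ j - z‖ ≤ r)
    (hJcard : (1 / 2 + δ) * k < (J.card : ℝ))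
    (m : H) (hm : IsGeomMedian θ m) :
    ‖m - z‖ ≤ (1 / 2 + δ) / Real.sqrt (2 * δ) * r := by
  by_contra hcon
  push_neg at hcon
  set C : ℝ := (1 / 2 + δ) / Real.sqrt (2 * δ) with hCdef
  set d : ℝ := ‖m - z‖ with hddef
  have hsqrt2δ : 0 < Real.sqrt (2 * δ) := Real.sqrt_pos.mpr (by linarith)
  have hsqrt_le : Real.sqrt (2 * δ) ≤ 1 / 2 + δ := by
    have h := Real.sqrt_le_sqrt (show 2 * δ ≤ (1 / 2 + δ) ^ 2 by nlinarith)
    rwa [Real.sqrt_sq (by linarith)] at h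
  have hC1 : (1 : ℝ) ≤ C := by
    rw [hCdef, le_div_iff₀ hsqrt2δ]; linarith
  have hrd : r < d := by
    have := mul_le_mul_of_nonneg_right hC1 hr
    simp only [one_mul] at this
    linarith
  have hd0 : 0 < d := lt_of_le_of_lt hr hrd
  have hdr0 : 0 < d - r := by linarith
  set s : ℝ := Real.sqrt (d ^ 2 - r ^ 2) with hsdef
  have hs2 : s ^ 2 = d ^ 2 - r ^ 2 := Real.sq_sqrt (by nlinarith)
  have hs0 : 0 < s := Real.sqrt_pos.mpr (by nlinarith)
  have hsd : s ≤ d := by nlinarith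
  have hzmd : ‖z - m‖ = d := by rw [hddef, norm_sub_rev]
  -- lower bound on ‖m - θ j‖ for good j
  have ha_lb : ∀ j ∈ J, d - r ≤ ‖m - θ j‖ := by
    intro j hj
    have h1 : d ≤ ‖m - θ j‖ + ‖θ j - z‖ := by
      calc d = ‖(m - θ j) + (θ j - z)‖ := by rw [hddef]; abel_nf
        _ ≤ _ := norm_add_le _ _
    have := hJ j hj
    linarith
  -- inner product bound
  have hinner : ∀ j ∈ J, (inner ℝ (m - θ j) (z - m) : ℝ) ≤ -(‖m - θ j‖ * s) := by
    intro j hj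
    have hnorm : ‖(θ j - m) - (z - m)‖ = ‖θ j - z‖ := by congr 1; abel
    have hexp := norm_sub_sq_real (θ j - m) (z - m)
    rw [hnorm] at hexp
    have hr2 : ‖θ j - z‖ ^ 2 ≤ r ^ 2 := by
      have := hJ j hj
      nlinarith [norm_nonneg (θ j - z)]
    have hrev : ‖θ j - m‖ = ‖m - θ j‖ := norm_sub_rev _ _
    rw [hrev, hzmd] at hexp
    have hin : (inner ℝ (m - θ j) (z - m) : ℝ) = - inner ℝ (θ j - m) (z - m) := by
      rw [← inner_neg_left]; congr 1; abel
    rw [hin]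
    set a : ℝ := ‖m - θ j‖
    have key : a * s ≤ (inner ℝ (θ j - m) (z - m) : ℝ) := by
      nlinarith [sq_nonneg (a - s)]
    linarith
  -- main finite-difference inequality
  have hkey : (J.card : ℝ) * s ≤ (Jᶜ.card : ℝ) * d := by
    apply le_of_small_t (M := (J.card : ℝ) * (r ^ 2 / (d - r)))
      (t₀ := (d - r) / (2 * d))
      (mul_nonneg (by positivity) (div_nonneg (sq_nonneg r) hdr0.le))
      (div_pos hdr0 (by linarith))
    intro t ht0 ht1
    have hmt := hm (m + t • (z - m))
    have htd : t * d ≤ (d - r) / 2 := by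
      rw [le_div_iff₀ (by linarith : (0:ℝ) < 2 * d)] at ht1
      nlinarith
    -- good bound
    have hgoodb : ∀ j ∈ J,
        ‖m + t • (z - m) - θ j‖ ≤ ‖m - θ j‖ - t * s + r ^ 2 / (d - r) * t ^ 2 := by
      intro j hj
      have ha := ha_lb j hj
      set a : ℝ := ‖m - θ j‖ with hadef
      have hu : (d - r) / 2 ≤ a - t * s := by
        have h1 : t * s ≤ t * d := mul_le_mul_of_nonneg_left hsd ht0.le
        linarith
      have hu0 : (0:ℝ) < a - t * s := lt_of_lt_of_le (by linarith) hu
      have hsq : ‖m + t • (z - m) - θ j‖ ^ 2 ≤ (a - t * s) ^ 2 + t ^ 2 * r ^ 2 := by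
        have hrw : m + t • (z - m) - θ j = (m - θ j) + t • (z - m) := by abel
        rw [hrw, @norm_add_sq_real, inner_smul_right, norm_smul, Real.norm_eq_abs,
          abs_of_pos ht0, hzmd, ← hadef]
        have h2 : 2 * (t * (inner ℝ (m - θ j) (z - m) : ℝ)) ≤ 2 * (t * (-(a * s))) := by
          have := mul_le_mul_of_nonneg_left (hinner j hj) ht0.le
          linarith
        nlinarith [hs2]
      set c : ℝ := r ^ 2 / (d - r) * t ^ 2 with hcdef
      have hc0 : (0:ℝ) ≤ c := mul_nonneg (div_nonneg (sq_nonneg r) hdr0.le) (sq_nonneg t)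
      have hceq : c * (d - r) = r ^ 2 * t ^ 2 := by
        rw [hcdef]; field_simp
      have hfin : ‖m + t • (z - m) - θ j‖ ^ 2 ≤ (a - t * s + c) ^ 2 := by
        have h2u : (d - r) * c ≤ 2 * (a - t * s) * c := by
          apply mul_le_mul_of_nonneg_right _ hc0
          linarith
        nlinarith [sq_nonneg c]
      have hnn : (0:ℝ) ≤ a - t * s + c := by linarith
      nlinarith [norm_nonneg (m + t • (z - m) - θ j), hfin, hnn]
    -- bad bound
    have hbadb : ∀ j : Fin k, ‖m + t • (z - m) - θ j‖ ≤ ‖m - θ j‖ + t * d := by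
      intro j
      have hrw : m + t • (z - m) - θ j = (m - θ j) + t • (z - m) := by abel
      rw [hrw]
      have h := norm_add_le (m - θ j) (t • (z - m))
      rw [norm_smul, Real.norm_eq_abs, abs_of_pos ht0, hzmd] at h
      exact h
    -- sum it
    have hsumJ : ∑ j ∈ J, ‖m + t • (z - m) - θ j‖ ≤
        ∑ j ∈ J, ‖m - θ j‖ - (J.card : ℝ) * (t * s)
          + (J.card : ℝ) * (r ^ 2 / (d - r) * t ^ 2) := by
      have h := Finset.sum_le_sum hgoodb
      rw [Finset.sum_add_distrib, Finset.sum_sub_distrib] at h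
      simp only [Finset.sum_const, nsmul_eq_mul] at h
      linarith
    have hsumB : ∑ j ∈ Jᶜ, ‖m + t • (z - m) - θ j‖ ≤
        ∑ j ∈ Jᶜ, ‖m - θ j‖ + (Jᶜ.card : ℝ) * (t * d) := by
      have h := Finset.sum_le_sum (fun j (_ : j ∈ Jᶜ) => hbadb j)
      rw [Finset.sum_add_distrib] at h
      simp only [Finset.sum_const, nsmul_eq_mul] at h
      linarith
    have hsplit1 : ∑ j ∈ J, ‖m - θ j‖ + ∑ j ∈ Jᶜ, ‖m - θ j‖ = ∑ j, ‖m - θ j‖ :=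
      Finset.sum_add_sum_compl J _
    have hsplit2 : ∑ j ∈ J, ‖m + t • (z - m) - θ j‖ + ∑ j ∈ Jᶜ, ‖m + t • (z - m) - θ j‖
        = ∑ j, ‖m + t • (z - m) - θ j‖ := Finset.sum_add_sum_compl J _
    have h0 : (J.card : ℝ) * (t * s) ≤ (Jᶜ.card : ℝ) * (t * d)
        + (J.card : ℝ) * (r ^ 2 / (d - r) * t ^ 2) := by linarith
    have h1 : t * ((J.card : ℝ) * s) ≤
        t * ((Jᶜ.card : ℝ) * d + (J.card : ℝ) * (r ^ 2 / (d - r)) * t) := by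
      ring_nf
      ring_nf at h0
      linarith
    have := le_of_mul_le_mul_left h1 ht0
    linarith
  -- conclude
  have hJk : (J.card : ℝ) ≤ k := by
    have h := Finset.card_le_univ J
    simp only [Finset.card_univ, Fintype.card_fin] at h
    exact_mod_cast h
  have hJc : (Jᶜ.card : ℝ) = k - J.card := by
    have h := Finset.card_add_card_compl J
    rw [Fintype.card_fin] at h
    have h2 : ((J.card + Jᶜ.card : ℕ) : ℝ) = k := by rw [h]
    push_cast at h2
    linarith
  have hk0 : (0:ℝ) < k := lt_of_le_of_lt (by positivity) (lt_of_lt_of_le hJcard hJk)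
  have hstep : (1 / 2 + δ) * s < (1 / 2 - δ) * d := by
    have h1 : (1 / 2 + δ) * k * s < (J.card : ℝ) * s := mul_lt_mul_of_pos_right hJcard hs0
    have h2 : (Jᶜ.card : ℝ) * d < (1 / 2 - δ) * k * d := by
      apply mul_lt_mul_of_pos_right _ hd0
      rw [hJc]; nlinarith
    have h3 := h1.trans_le (hkey.trans h2.le)
    nlinarith
  have hsq2 : ((1 / 2 + δ) * s) ^ 2 < ((1 / 2 - δ) * d) ^ 2 := by
    have := mul_self_lt_mul_self (by positivity : (0:ℝ) ≤ (1 / 2 + δ) * s) hstep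
    nlinarith
  have hC2 : C ^ 2 * r ^ 2 < d ^ 2 := by
    have hCr0 : (0:ℝ) ≤ C * r := mul_nonneg (by linarith) hr
    nlinarith
  have hCsq : C ^ 2 = (1 / 2 + δ) ^ 2 / (2 * δ) := by
    rw [hCdef, div_pow, Real.sq_sqrt (by linarith)]
  rw [hCsq, div_mul_eq_mul_div, div_lt_iff₀ (by linarith : (0:ℝ) < 2 * δ)] at hC2
  nlinarith [hsq2, hs2]

/-- **Quantitative breakdown-point theorem for DRL.** If the per-machine outlier fractions
`λ i ∈ [0,1]` have average at most `(1/2 - δ) λ*`, and every machine with outlier fraction at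
most `λ*` (the breakdown point of the base algorithm) outputs an estimate within distance `r`
of `θ*` (other machines being arbitrary), then strictly more than `(1/2 + δ) k` machines have
`λ i ≤ λ*`, and every geometric median of the estimates lies within distance
`C_{1/2 - δ} · r = ((1/2 + δ)/√(2δ)) · r` of `θ*`. -/
theorem drl_breakdown_point {H : Type*} [NormedAddCommGroup H] [InnerProductSpace ℝ H]
    [CompleteSpace H] {k : ℕ} (hk : 0 < k)
    (θstar : H) (r : ℝ) (hr : 0 ≤ r)
    (lamStar : ℝ) (hlamStar : lamStar ∈ Set.Ioc (0 : ℝ) 1)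
    (δ : ℝ) (hδ : δ ∈ Set.Ioo (0 : ℝ) (1 / 2))
    (lam : Fin k → ℝ) (hlam : ∀ i, lam i ∈ Set.Icc (0 : ℝ) 1)
    (havg : (1 / k : ℝ) * ∑ i, lam i ≤ (1 / 2 - δ) * lamStar)
    (θhat : Fin k → H)
    (hgood : ∀ i, lam i ≤ lamStar → ‖θhat i - θstar‖ ≤ r) :
    (1 / 2 + δ) * k < ((Finset.univ.filter fun i => lam i ≤ lamStar).card : ℝ) ∧
      ∀ θtilde : H, IsGeomMedian θhat θtilde →
        ‖θtilde - θstar‖ ≤ (1 / 2 + δ) / Real.sqrt (2 * δ) * r := by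
  obtain ⟨hls0, hls1⟩ := hlamStar
  obtain ⟨hδ0, hδ2⟩ := hδ
  have hk0 : (0:ℝ) < k := by exact_mod_cast hk
  set G : Finset (Fin k) := Finset.univ.filter fun i => lam i ≤ lamStar with hGdef
  set B : Finset (Fin k) := Finset.univ.filter fun i => ¬ lam i ≤ lamStar with hBdef
  have hsum : ∑ i, lam i ≤ (1 / 2 - δ) * lamStar * k := by
    have h := mul_le_mul_of_nonneg_left havg hk0.le
    have heq : (k:ℝ) * (1 / k * ∑ i, lam i) = ∑ i, lam i := by
      field_simp
    rw [heq] at h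
    linarith [h]
  have hBbound : (B.card : ℝ) * lamStar < (1 / 2 - δ) * lamStar * k := by
    rcases B.eq_empty_or_nonempty with hB | hB
    · rw [hB]
      simp only [Finset.card_empty, Nat.cast_zero, zero_mul]
      exact mul_pos (mul_pos (by linarith) hls0) hk0
    · have h1 : (B.card : ℝ) * lamStar < ∑ i ∈ B, lam i := by
        have := Finset.sum_lt_sum_of_nonempty hB
          (f := fun _ => lamStar) (g := lam)
          (fun i hi => by
            simp only [hBdef, Finset.mem_filter] at hi
            exact lt_of_not_ge hi.2)
        simpa [Finset.sum_const, nsmul_eq_mul, mul_comm] using this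
      have h2 : ∑ i ∈ B, lam i ≤ ∑ i, lam i := by
        apply Finset.sum_le_sum_of_subset_of_nonneg (Finset.subset_univ B)
        intro i _ _
        exact (hlam i).1
      linarith
  have hBcard : (B.card : ℝ) < (1 / 2 - δ) * k := by
    have h' : (B.card : ℝ) * lamStar < ((1 / 2 - δ) * k) * lamStar := by
      nlinarith [hBbound]
    exact lt_of_mul_lt_mul_right h' hls0.le
  have hGB : (G.card : ℝ) + B.card = k := by
    have h := Finset.card_filter_add_card_filter_not
      (s := Finset.univ) (p := fun i => lam i ≤ lamStar)
    rw [Finset.card_univ, Fintype.card_fin] at h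
    exact_mod_cast h
  have hGcard : (1 / 2 + δ) * k < (G.card : ℝ) := by nlinarith
  refine ⟨hGcard, ?_⟩
  intro θtilde hmed
  exact geom_median_bound θhat θstar r hr δ hδ0 hδ2 G
    (fun j hj => hgood j (by simpa [hGdef] using hj)) hGcard θtilde hmed
end
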